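/- Fix an integer d ≥ 1 and reals γ > 0, φ > 0, k > 0, and let ℓ* be the least ℓ ∈ ℕ with φ·2^{(d+γ)(ℓ−1)} ≥ k. Let a : ℕ → ℝ satisfy 0 ≤ a_ℓ ≤ a_{ℓ+1} for all ℓ ∈ ℕ, and 2·a_{ℓ+1} ≤ 2^γ·a_ℓ for all ℓ ≥ ℓ* (the ratio condition is only required from level ℓ* onward). Then for every feasible level-count vector x : ℕ → ℝ, ∑_{ℓ∈ℕ} a_ℓ·x_ℓ ≤ 2^{d·ℓ*}·a_{ℓ*}. -/

import Mathlib

/-- Refined LP-bound lemma: the ratio condition `2·a_{ℓ+1} ≤ 2^γ·a_ℓ` is only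
required for levels `ℓ ≥ ℓ*`. -/
theorem stmt_2 (d : ℕ) (hd : 1 ≤ d) (γ φ k : ℝ) (hγ : 0 < γ) (hφ : 0 < φ) (hk : 0 < k)
    (ℓstar : ℕ)
    (hstar : IsLeast {ℓ : ℕ | k ≤ φ * (2 : ℝ) ^ (((d : ℝ) + γ) * ((ℓ : ℝ) - 1))} ℓstar)
    (a : ℕ → ℝ)
    (ha0 : ∀ ℓ, 0 ≤ a ℓ)
    (hamono : ∀ ℓ, a ℓ ≤ a (ℓ + 1))
    (haratio : ∀ ℓ : ℕ, ℓstar ≤ ℓ → 2 * a (ℓ + 1) ≤ (2 : ℝ) ^ γ * a ℓ)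
    (x : ℕ → ℝ)
    (hxfin : (Function.support x).Finite)
    (hxnn : ∀ ℓ, 0 ≤ x ℓ)
    (hkraft : ∑' ℓ : ℕ, (2 : ℝ) ^ (-((d : ℝ) * (ℓ : ℝ))) * x ℓ ≤ 1)
    (hsample : ∑' ℓ : ℕ,
        φ * (2 : ℝ) ^ (γ * ((ℓ : ℝ) - 1)) * (2 : ℝ) ^ (-(d : ℝ)) * x ℓ ≤ k) :
    ∑' ℓ : ℕ, a ℓ * x ℓ ≤ (2 : ℝ) ^ (d * ℓstar) * a ℓstar := by
  have h2 : (0:ℝ) < 2 := two_pos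
  have key : ∀ s t : ℝ, (2:ℝ) ^ s * (2:ℝ) ^ t = (2:ℝ) ^ (s + t) :=
    fun s t => (Real.rpow_add h2 s t).symm
  set L : ℝ := (ℓstar : ℝ) with hL
  set C : ℝ := (2 : ℝ) ^ (d * ℓstar) * a ℓstar with hCdef
  have hastar : 0 ≤ a ℓstar := ha0 _
  have hC0 : 0 ≤ C := by positivity
  have hCr : C = (2:ℝ) ^ ((d:ℝ) * L) * a ℓstar := by
    rw [hCdef, ← Real.rpow_natCast 2 (d * ℓstar)]
    push_cast
    ring_nf
    rw [hL]; ring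
  have hmono : Monotone a := monotone_nat_of_le_succ hamono
  -- growth bound beyond ℓstar
  have hgrow : ∀ m : ℕ, a (ℓstar + m) ≤ (2:ℝ) ^ ((γ - 1) * (m:ℝ)) * a ℓstar := by
    intro m
    induction m with
    | zero => simp
    | succ n ih =>
      have h1 := haratio (ℓstar + n) (Nat.le_add_right _ _)
      have hstep : a (ℓstar + (n + 1)) ≤ (2:ℝ) ^ (γ - 1) * a (ℓstar + n) := by
        have h2γ : (2:ℝ) ^ (γ - 1) = (2:ℝ) ^ γ / 2 := by
          rw [Real.rpow_sub h2, Real.rpow_one]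
        rw [h2γ]
        have : ℓstar + (n + 1) = (ℓstar + n) + 1 := by ring
        rw [this]
        linarith
      calc a (ℓstar + (n + 1)) ≤ (2:ℝ) ^ (γ - 1) * a (ℓstar + n) := hstep
        _ ≤ (2:ℝ) ^ (γ - 1) * ((2:ℝ) ^ ((γ - 1) * (n:ℝ)) * a ℓstar) :=
            mul_le_mul_of_nonneg_left ih (Real.rpow_nonneg (by norm_num) _)
        _ = (2:ℝ) ^ ((γ - 1) * ((n:ℝ) + 1)) * a ℓstar := by
            rw [← mul_assoc, key]
            congr 1
            · congr 1
              ring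
        _ = (2:ℝ) ^ ((γ - 1) * (((n:ℕ) + 1 : ℕ) : ℝ)) * a ℓstar := by push_cast; ring_nf
  -- the star inequality
  have hstarineq : ∀ ℓ : ℕ, a ℓ ≤
      a ℓstar / 2 * (2:ℝ) ^ ((d:ℝ) * (L - (ℓ:ℝ))) +
      a ℓstar / 2 * (2:ℝ) ^ (γ * ((ℓ:ℝ) - L)) := by
    intro ℓ
    rcases lt_or_ge ℓ ℓstar with hlt | hle
    · -- ℓ < ℓstar
      have h1 : (1:ℝ) ≤ (d:ℝ) * (L - (ℓ:ℝ)) := by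
        have hd1 : (1:ℝ) ≤ (d:ℝ) := by exact_mod_cast hd
        have : (1:ℝ) ≤ L - (ℓ:ℝ) := by
          rw [hL]
          have : (ℓ:ℝ) + 1 ≤ (ℓstar:ℝ) := by exact_mod_cast hlt
          linarith
        nlinarith
      have h2e : (2:ℝ) ≤ (2:ℝ) ^ ((d:ℝ) * (L - (ℓ:ℝ))) := by
        calc (2:ℝ) = (2:ℝ) ^ (1:ℝ) := (Real.rpow_one 2).symm
          _ ≤ _ := Real.rpow_le_rpow_left_iff one_lt_two |>.mpr h1
      have haℓ : a ℓ ≤ a ℓstar := hmono (le_of_lt hlt)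
      have hnn : 0 ≤ a ℓstar / 2 * (2:ℝ) ^ (γ * ((ℓ:ℝ) - L)) := by positivity
      nlinarith
    · -- ℓstar ≤ ℓ
      obtain ⟨m, rfl⟩ := Nat.exists_eq_add_of_le hle
      have hcast : ((ℓstar + m : ℕ) : ℝ) - L = (m:ℝ) := by push_cast [hL]; ring
      rw [hcast]
      have hg := hgrow m
      rcases Nat.eq_zero_or_pos m with hm0 | hm1
      · subst hm0
        have hLL : (d:ℝ) * (L - ((ℓstar + 0 : ℕ):ℝ)) = 0 := by push_cast [hL]; ring
        rw [hLL, Real.rpow_zero]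
        have hg0 : a (ℓstar + 0) = a ℓstar := by norm_num
        simp only [Nat.cast_zero, mul_zero, Real.rpow_zero]
        rw [hg0]
        linarith
      · have hsplit : (2:ℝ) ^ ((γ - 1) * (m:ℝ)) =
            (2:ℝ) ^ (γ * (m:ℝ)) * (2:ℝ) ^ (-(m:ℝ)) := by
          rw [key]; congr 1; ring
        have hm : (1:ℝ) ≤ (m:ℝ) := by exact_mod_cast hm1
        have hhalf : (2:ℝ) ^ (-(m:ℝ)) ≤ 1 / 2 := by
          have : (2:ℝ) ^ (-(m:ℝ)) ≤ (2:ℝ) ^ (-(1:ℝ)) :=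
            Real.rpow_le_rpow_left_iff one_lt_two |>.mpr (by linarith)
          calc (2:ℝ) ^ (-(m:ℝ)) ≤ (2:ℝ) ^ (-(1:ℝ)) := this
            _ = 1 / 2 := by rw [Real.rpow_neg_one]; norm_num
        have hgm : (0:ℝ) < (2:ℝ) ^ (γ * (m:ℝ)) := Real.rpow_pos_of_pos h2 _
        have h1nn : (0:ℝ) ≤ a ℓstar / 2 * (2:ℝ) ^ ((d:ℝ) * (L - ((ℓstar + m : ℕ):ℝ))) := by
          positivity
        have : a (ℓstar + m) ≤ a ℓstar / 2 * (2:ℝ) ^ (γ * (m:ℝ)) := by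
          calc a (ℓstar + m) ≤ (2:ℝ) ^ ((γ - 1) * (m:ℝ)) * a ℓstar := hg
            _ = (2:ℝ) ^ (γ * (m:ℝ)) * (2:ℝ) ^ (-(m:ℝ)) * a ℓstar := by rw [hsplit]
            _ ≤ (2:ℝ) ^ (γ * (m:ℝ)) * (1/2) * a ℓstar := by
                apply mul_le_mul_of_nonneg_right _ hastar
                exact mul_le_mul_of_nonneg_left hhalf (le_of_lt hgm)
            _ = a ℓstar / 2 * (2:ℝ) ^ (γ * (m:ℝ)) := by ring
        linarith
  -- the key pointwise dual inequality
  have hkey : ∀ ℓ : ℕ, a ℓ ≤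
      C / 2 * (2:ℝ) ^ (-((d:ℝ) * (ℓ:ℝ))) +
      C / (2 * k) * (φ * (2:ℝ) ^ (γ * ((ℓ:ℝ) - 1)) * (2:ℝ) ^ (-(d:ℝ))) := by
    intro ℓ
    have hT1 : C / 2 * (2:ℝ) ^ (-((d:ℝ) * (ℓ:ℝ))) =
        a ℓstar / 2 * (2:ℝ) ^ ((d:ℝ) * (L - (ℓ:ℝ))) := by
      rw [hCr]
      rw [show (2:ℝ) ^ ((d:ℝ) * L) * a ℓstar / 2 * (2:ℝ) ^ (-((d:ℝ) * (ℓ:ℝ)))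
          = a ℓstar / 2 * ((2:ℝ) ^ ((d:ℝ) * L) * (2:ℝ) ^ (-((d:ℝ) * (ℓ:ℝ)))) from by ring]
      rw [key]
      congr 2
      ring
    have hT2 : a ℓstar / 2 * (2:ℝ) ^ (γ * ((ℓ:ℝ) - L)) ≤
        C / (2 * k) * (φ * (2:ℝ) ^ (γ * ((ℓ:ℝ) - 1)) * (2:ℝ) ^ (-(d:ℝ))) := by
      rw [show C / (2 * k) * (φ * (2:ℝ) ^ (γ * ((ℓ:ℝ) - 1)) * (2:ℝ) ^ (-(d:ℝ)))
          = C * (φ * (2:ℝ) ^ (γ * ((ℓ:ℝ) - 1)) * (2:ℝ) ^ (-(d:ℝ))) / (2 * k) from by ring,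
        le_div_iff₀ (by positivity)]
      have hstar1 : k ≤ φ * (2:ℝ) ^ (((d:ℝ) + γ) * (L - 1)) := hstar.1
      calc a ℓstar / 2 * (2:ℝ) ^ (γ * ((ℓ:ℝ) - L)) * (2 * k)
          ≤ a ℓstar / 2 * (2:ℝ) ^ (γ * ((ℓ:ℝ) - L)) * (2 * (φ * (2:ℝ) ^ (((d:ℝ) + γ) * (L - 1)))) := by
            apply mul_le_mul_of_nonneg_left (by linarith) (by positivity)
        _ = a ℓstar * φ * ((2:ℝ) ^ (γ * ((ℓ:ℝ) - L)) * (2:ℝ) ^ (((d:ℝ) + γ) * (L - 1))) := by ring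
        _ = a ℓstar * φ * (2:ℝ) ^ (γ * ((ℓ:ℝ) - L) + ((d:ℝ) + γ) * (L - 1)) := by rw [key]
        _ = a ℓstar * φ * (2:ℝ) ^ ((d:ℝ) * L + (γ * ((ℓ:ℝ) - 1) + -(d:ℝ))) := by
            congr 1; ring
        _ = a ℓstar * φ * ((2:ℝ) ^ ((d:ℝ) * L) * ((2:ℝ) ^ (γ * ((ℓ:ℝ) - 1)) * (2:ℝ) ^ (-(d:ℝ)))) := by
            rw [key, key]
        _ = C * (φ * (2:ℝ) ^ (γ * ((ℓ:ℝ) - 1)) * (2:ℝ) ^ (-(d:ℝ))) := by rw [hCr]; ring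
    calc a ℓ ≤ a ℓstar / 2 * (2:ℝ) ^ ((d:ℝ) * (L - (ℓ:ℝ))) +
          a ℓstar / 2 * (2:ℝ) ^ (γ * ((ℓ:ℝ) - L)) := hstarineq ℓ
      _ ≤ _ := by rw [hT1]; linarith
  -- summability
  have hsumm : ∀ f : ℕ → ℝ, Summable (fun ℓ => f ℓ * x ℓ) := by
    intro f
    apply summable_of_ne_finset_zero (s := hxfin.toFinset)
    intro b hb
    have : x b = 0 := by
      by_contra hxb
      exact hb (hxfin.mem_toFinset.mpr hxb)
    simp [this]
  have hsum_u : Summable (fun ℓ : ℕ => (2:ℝ) ^ (-((d:ℝ) * (ℓ:ℝ))) * x ℓ) := hsumm _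
  have hsum_v : Summable (fun ℓ : ℕ =>
      φ * (2:ℝ) ^ (γ * ((ℓ:ℝ) - 1)) * (2:ℝ) ^ (-(d:ℝ)) * x ℓ) := hsumm _
  have hsum_ax : Summable (fun ℓ : ℕ => a ℓ * x ℓ) := hsumm _
  have hsum_rhs : Summable (fun ℓ : ℕ =>
      C / 2 * ((2:ℝ) ^ (-((d:ℝ) * (ℓ:ℝ))) * x ℓ) +
      C / (2 * k) * (φ * (2:ℝ) ^ (γ * ((ℓ:ℝ) - 1)) * (2:ℝ) ^ (-(d:ℝ)) * x ℓ)) :=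
    (hsum_u.mul_left _).add (hsum_v.mul_left _)
  have step1 : ∑' ℓ : ℕ, a ℓ * x ℓ ≤ ∑' ℓ : ℕ,
      (C / 2 * ((2:ℝ) ^ (-((d:ℝ) * (ℓ:ℝ))) * x ℓ) +
       C / (2 * k) * (φ * (2:ℝ) ^ (γ * ((ℓ:ℝ) - 1)) * (2:ℝ) ^ (-(d:ℝ)) * x ℓ)) := by
    apply Summable.tsum_le_tsum _ hsum_ax hsum_rhs
    intro ℓ
    have h := mul_le_mul_of_nonneg_right (hkey ℓ) (hxnn ℓ)
    calc a ℓ * x ℓ ≤ (C / 2 * (2:ℝ) ^ (-((d:ℝ) * (ℓ:ℝ))) +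
        C / (2 * k) * (φ * (2:ℝ) ^ (γ * ((ℓ:ℝ) - 1)) * (2:ℝ) ^ (-(d:ℝ)))) * x ℓ := h
      _ = _ := by ring
  have step2 : ∑' ℓ : ℕ,
      (C / 2 * ((2:ℝ) ^ (-((d:ℝ) * (ℓ:ℝ))) * x ℓ) +
       C / (2 * k) * (φ * (2:ℝ) ^ (γ * ((ℓ:ℝ) - 1)) * (2:ℝ) ^ (-(d:ℝ)) * x ℓ)) =
      C / 2 * (∑' ℓ : ℕ, (2:ℝ) ^ (-((d:ℝ) * (ℓ:ℝ))) * x ℓ) +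
      C / (2 * k) * (∑' ℓ : ℕ, φ * (2:ℝ) ^ (γ * ((ℓ:ℝ) - 1)) * (2:ℝ) ^ (-(d:ℝ)) * x ℓ) := by
    rw [Summable.tsum_add (hsum_u.mul_left _) (hsum_v.mul_left _), tsum_mul_left, tsum_mul_left]
  have hfin : C / 2 * (∑' ℓ : ℕ, (2:ℝ) ^ (-((d:ℝ) * (ℓ:ℝ))) * x ℓ) +
      C / (2 * k) * (∑' ℓ : ℕ, φ * (2:ℝ) ^ (γ * ((ℓ:ℝ) - 1)) * (2:ℝ) ^ (-(d:ℝ)) * x ℓ) ≤ C := by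
    have h1 : C / 2 * (∑' ℓ : ℕ, (2:ℝ) ^ (-((d:ℝ) * (ℓ:ℝ))) * x ℓ) ≤ C / 2 * 1 :=
      mul_le_mul_of_nonneg_left hkraft (by positivity)
    have h2' : C / (2 * k) * (∑' ℓ : ℕ, φ * (2:ℝ) ^ (γ * ((ℓ:ℝ) - 1)) * (2:ℝ) ^ (-(d:ℝ)) * x ℓ) ≤
        C / (2 * k) * k := mul_le_mul_of_nonneg_left hsample (by positivity)
    have h3 : C / (2 * k) * k = C / 2 := by field_simp
    linarith
  calc ∑' ℓ : ℕ, a ℓ * x ℓ ≤ _ := step1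
    _ = _ := step2
    _ ≤ C := hfin
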